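/- Let D = diag(λ₁,…,λ_n) with all λ_i > 0 and let β be a real skew-symmetric n×n matrix with ‖D^{-1/2} β D^{-1/2}‖ ≤ δ for some 0 < δ < 1 (operator norm). Set R = D + β. Then for every 1 ≤ k ≤ n: S_k(D) ≤ S_k(R) ≤ (1+δ²)^{⌊k/2⌋} S_k(D), where S_k denotes the sum of all principal k×k minors. -/

import Mathlib

open Matrix

/-- The sum of all principal k×k minors of a real n×n matrix. -/
noncomputable def Sk {n : ℕ} (k : ℕ) (M : Matrix (Fin n) (Fin n) ℝ) : ℝ :=
  ∑ s : {s : Finset (Fin n) // s.card = k},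
    (M.submatrix (s.1.orderEmbOfFin s.2) (s.1.orderEmbOfFin s.2)).det

/-- The operator (spectral) norm of a real matrix. -/
noncomputable def opNorm {n : ℕ} (M : Matrix (Fin n) (Fin n) ℝ) : ℝ :=
  ‖(Matrix.toEuclideanCLM (𝕜 := ℝ) (n := Fin n)) M‖

lemma quad_bound {n : ℕ} {M : Matrix (Fin n) (Fin n) ℝ} {δ : ℝ} (hδ : 0 ≤ δ)
    (h : opNorm M ≤ δ) (x : Fin n → ℝ) :
    ∑ i, (M.mulVec x i)^2 ≤ δ^2 * ∑ i, (x i)^2 := by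
  have hx := (Matrix.toEuclideanCLM (𝕜 := ℝ) (n := Fin n) M).le_opNorm
    ((WithLp.equiv 2 (Fin n → ℝ)).symm x)
  change ‖(WithLp.equiv 2 (Fin n → ℝ)).symm (Matrix.toLin' M x)‖ ≤ _ at hx
  have h1 : ‖(WithLp.equiv 2 (Fin n → ℝ)).symm (Matrix.toLin' M x)‖
      = Real.sqrt (∑ i, (M.mulVec x i)^2) := by
    rw [EuclideanSpace.norm_eq]
    congr 1
    apply Finset.sum_congr rfl
    intro i _
    rw [Real.norm_eq_abs, sq_abs]
    rfl
  have h2 : ‖(WithLp.equiv 2 (Fin n → ℝ)).symm x‖ = Real.sqrt (∑ i, (x i)^2) := by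
    rw [EuclideanSpace.norm_eq]
    congr 1
    apply Finset.sum_congr rfl
    intro i _
    rw [Real.norm_eq_abs, sq_abs]
    rfl
  rw [h1, h2] at hx
  have hx2 : Real.sqrt (∑ i, (M.mulVec x i)^2) ≤ δ * Real.sqrt (∑ i, (x i)^2) :=
    le_trans hx (mul_le_mul_of_nonneg_right h (Real.sqrt_nonneg _))
  have hs : (0:ℝ) ≤ ∑ i, (M.mulVec x i)^2 := Finset.sum_nonneg fun i _ => sq_nonneg _
  have hs2 : (0:ℝ) ≤ ∑ i, (x i)^2 := Finset.sum_nonneg fun i _ => sq_nonneg _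
  calc ∑ i, (M.mulVec x i)^2 = Real.sqrt (∑ i, (M.mulVec x i)^2)^2 := (Real.sq_sqrt hs).symm
    _ ≤ (δ * Real.sqrt (∑ i, (x i)^2))^2 := by
        apply pow_le_pow_left₀ (Real.sqrt_nonneg _) hx2
    _ = δ^2 * ∑ i, (x i)^2 := by rw [mul_pow, Real.sq_sqrt hs2]

lemma quad_bound_submatrix {n k : ℕ} {M : Matrix (Fin n) (Fin n) ℝ} {c : ℝ}
    (h : ∀ x : Fin n → ℝ, ∑ i, (M.mulVec x i)^2 ≤ c * ∑ i, (x i)^2)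
    (e : Fin k → Fin n) (he : Function.Injective e) (v : Fin k → ℝ) :
    ∑ i, ((M.submatrix e e).mulVec v i)^2 ≤ c * ∑ i, (v i)^2 := by
  classical
  set x : Fin n → ℝ := Function.extend e v 0 with hxdef
  have hxe : ∀ p, x (e p) = v p := fun p => he.extend_apply v 0 p
  have hx0 : ∀ j, j ∉ Finset.image e Finset.univ → x j = 0 := by
    intro j hj
    apply Function.extend_apply'
    rintro ⟨a, rfl⟩
    exact hj (Finset.mem_image_of_mem e (Finset.mem_univ a))
  have key : ∀ i, (M.submatrix e e).mulVec v i = M.mulVec x (e i) := by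
    intro i
    unfold Matrix.mulVec dotProduct
    simp only [Matrix.submatrix_apply]
    rw [show (∑ p, M (e i) (e p) * v p) = ∑ p, M (e i) (e p) * x (e p) by
      exact Finset.sum_congr rfl fun p _ => by rw [hxe]]
    rw [← Finset.sum_image (s := Finset.univ) (g := e) (f := fun j => M (e i) j * x j)
      (fun p _ q _ hpq => he hpq)]
    apply Finset.sum_subset (Finset.subset_univ _)
    intro j _ hj
    rw [hx0 j hj, mul_zero]
  have hxsum : ∑ j, (x j)^2 = ∑ p, (v p)^2 := by
    rw [← Finset.sum_subset (Finset.subset_univ (Finset.image e Finset.univ))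
      (fun j _ hj => by rw [hx0 j hj]; ring),
      Finset.sum_image (s := Finset.univ) (g := e) (fun p _ q _ hpq => he hpq)]
    exact Finset.sum_congr rfl fun p _ => by rw [hxe]
  calc ∑ i, ((M.submatrix e e).mulVec v i)^2 = ∑ i, (M.mulVec x (e i))^2 := by
        exact Finset.sum_congr rfl fun i _ => by rw [key]
    _ = ∑ j ∈ Finset.image e Finset.univ, (M.mulVec x j)^2 := by
        rw [Finset.sum_image (s := Finset.univ) (g := e) (fun p _ q _ hpq => he hpq)]
    _ ≤ ∑ j, (M.mulVec x j)^2 := Finset.sum_le_sum_of_subset_of_nonneg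
        (Finset.subset_univ _) (fun j _ _ => sq_nonneg _)
    _ ≤ c * ∑ j, (x j)^2 := h x
    _ = c * ∑ p, (v p)^2 := by rw [hxsum]

lemma det_one_add_hermitian {k : ℕ} {M : Matrix (Fin k) (Fin k) ℝ} (hM : M.IsHermitian) :
    (1 + M).det = ∏ i, (1 + hM.eigenvalues i) := by
  have hU : (hM.eigenvectorUnitary : Matrix (Fin k) (Fin k) ℝ) *
      star (hM.eigenvectorUnitary : Matrix (Fin k) (Fin k) ℝ) = 1 :=
    Matrix.mem_unitaryGroup_iff.mp hM.eigenvectorUnitary.2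
  have h1 : (1 : Matrix (Fin k) (Fin k) ℝ) + M =
      (hM.eigenvectorUnitary : Matrix (Fin k) (Fin k) ℝ) *
        (1 + diagonal (RCLike.ofReal ∘ hM.eigenvalues)) *
        star (hM.eigenvectorUnitary : Matrix (Fin k) (Fin k) ℝ) := by
    rw [mul_add, add_mul, mul_one, hU, ← Unitary.conjStarAlgAut_apply (S := ℝ), ← hM.spectral_theorem]
  rw [h1, det_mul, det_mul, mul_comm (det _), mul_assoc, ← det_mul, hU, det_one, mul_one]
  have : (1 : Matrix (Fin k) (Fin k) ℝ) + diagonal (RCLike.ofReal ∘ hM.eigenvalues) =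
      diagonal (fun i => 1 + hM.eigenvalues i) := by
    rw [← diagonal_one, diagonal_add]
    rfl
  rw [this, det_diagonal]

lemma eig_le {k : ℕ} {A : Matrix (Fin k) (Fin k) ℝ} {c : ℝ}
    (hq : ∀ v : Fin k → ℝ, ∑ i, (A.mulVec v i)^2 ≤ c * ∑ i, (v i)^2)
    (hM : (Aᵀ * A).IsHermitian) (j : Fin k) : hM.eigenvalues j ≤ c := by
  set v : Fin k → ℝ := ⇑(hM.eigenvectorBasis j) with hv
  have hmv : (Aᵀ * A) *ᵥ v = hM.eigenvalues j • v := hM.mulVec_eigenvectorBasis j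
  have hn : ∑ i, (v i)^2 = 1 := by
    have h1 := hM.eigenvectorBasis.orthonormal.1 j
    rw [EuclideanSpace.norm_eq] at h1
    have h2 : ∑ i, ‖hM.eigenvectorBasis j i‖^2 = 1 := by
      rw [← Real.sqrt_eq_one]; exact h1
    calc ∑ i, (v i)^2 = ∑ i, ‖hM.eigenvectorBasis j i‖^2 := by
          exact Finset.sum_congr rfl fun i _ => by rw [Real.norm_eq_abs, sq_abs]
      _ = 1 := h2
  have key : hM.eigenvalues j = ∑ i, (A.mulVec v i)^2 := by
    have h3 : v ⬝ᵥ ((Aᵀ * A) *ᵥ v) = hM.eigenvalues j := by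
      rw [hmv, dotProduct_smul, smul_eq_mul]
      have : v ⬝ᵥ v = ∑ i, (v i)^2 := by
        unfold dotProduct; exact Finset.sum_congr rfl fun i _ => (sq (v i)).symm
      rw [this, hn, mul_one]
    have h4 : v ⬝ᵥ ((Aᵀ * A) *ᵥ v) = (A *ᵥ v) ⬝ᵥ (A *ᵥ v) := by
      rw [← mulVec_mulVec, dotProduct_mulVec, vecMul_transpose]
    rw [← h3, h4]
    unfold dotProduct
    exact Finset.sum_congr rfl fun i _ => (sq _).symm
  rw [key]
  calc ∑ i, (A.mulVec v i)^2 ≤ c * ∑ i, (v i)^2 := hq v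
    _ = c := by rw [hn, mul_one]

lemma skew_prod {k : ℕ} {A : Matrix (Fin k) (Fin k) ℝ} (hA : Aᵀ = -A) :
    (1 + A) * (1 + A)ᵀ = 1 + Aᵀ * A := by
  rw [transpose_add, transpose_one, hA]
  noncomm_ring

lemma one_le_det_one_add_psd {k : ℕ} {M : Matrix (Fin k) (Fin k) ℝ} (hM : M.PosSemidef) :
    1 ≤ (1 + M).det := by
  rw [det_one_add_hermitian hM.1]
  have := Finset.prod_le_prod (s := Finset.univ) (f := fun _ : Fin k => (1:ℝ))
    (g := fun i => 1 + hM.1.eigenvalues i) (by intros; norm_num)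
    (fun i _ => by have := hM.eigenvalues_nonneg i; linarith)
  simpa using this

lemma skew_det_pos {k : ℕ} {A : Matrix (Fin k) (Fin k) ℝ} (hA : Aᵀ = -A) :
    0 < (1 + A).det := by
  set f : ℝ → ℝ := fun t => (1 + t • A).det with hf
  have hfc : Continuous f := by
    apply Continuous.matrix_det
    exact continuous_const.add (continuous_id.smul continuous_const)
  have hne : ∀ t, f t ≠ 0 := by
    intro t
    have hskew : (t • A)ᵀ = -(t • A) := by rw [transpose_smul, hA, smul_neg]
    have hpsd : ((t • A)ᵀ * (t • A)).PosSemidef := by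
      have := Matrix.posSemidef_conjTranspose_mul_self (t • A)
      rwa [conjTranspose_eq_transpose_of_trivial] at this
    have h2 : f t * f t = (1 + (t • A)ᵀ * (t • A)).det := by
      rw [hf]
      simp only
      rw [← skew_prod hskew, det_mul, det_transpose]
    have h3 := one_le_det_one_add_psd hpsd
    intro h0
    rw [h0, mul_zero] at h2
    linarith
  have hf0 : f 0 = 1 := by simp [hf]
  by_contra hle
  push_neg at hle
  have hf1 : f 1 = (1 + A).det := by simp [hf]
  have hlt : f 1 < 0 := lt_of_le_of_ne (by rw [hf1]; exact hle) (hne 1)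
  have hmem : (0:ℝ) ∈ Set.Icc (f 1) (f 0) := ⟨le_of_lt hlt, by rw [hf0]; norm_num⟩
  obtain ⟨t, _, ht⟩ := intermediate_value_Icc' (by norm_num : (0:ℝ) ≤ 1)
    (hfc.continuousOn) hmem
  exact hne t ht

lemma skew_det_bounds {k : ℕ} {A : Matrix (Fin k) (Fin k) ℝ} (hA : Aᵀ = -A)
    {δ : ℝ} (hδ : 0 ≤ δ)
    (hq : ∀ v : Fin k → ℝ, ∑ i, (A.mulVec v i)^2 ≤ δ^2 * ∑ i, (v i)^2) :
    1 ≤ (1 + A).det ∧ (1 + A).det ≤ (1 + δ^2)^(k/2) := by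
  have hpsd : (Aᵀ * A).PosSemidef := by
    have := Matrix.posSemidef_conjTranspose_mul_self A
    rwa [conjTranspose_eq_transpose_of_trivial] at this
  have hM := hpsd.1
  have hsq : (1 + A).det * (1 + A).det = ∏ i, (1 + hM.eigenvalues i) := by
    rw [← det_one_add_hermitian hM, ← skew_prod hA, det_mul, det_transpose]
  have hpos := skew_det_pos hA
  have heig0 : ∀ i, 0 ≤ hM.eigenvalues i := hpsd.eigenvalues_nonneg
  have heig1 : ∀ i, hM.eigenvalues i ≤ δ^2 := eig_le hq hM
  constructor
  · have h1 : 1 ≤ (1 + A).det * (1 + A).det := by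
      rw [hsq]
      have := Finset.prod_le_prod (s := Finset.univ) (f := fun _ : Fin k => (1:ℝ))
        (g := fun i => 1 + hM.eigenvalues i) (by intros; norm_num)
        (fun i _ => by have := heig0 i; linarith)
      simpa using this
    nlinarith
  · have hub : ∏ i, (1 + hM.eigenvalues i) ≤ (1 + δ^2)^(2*(k/2)) := by
      rcases Nat.even_or_odd k with he | ho
      · have : 2 * (k/2) = k := by rcases he with ⟨m, rfl⟩; omega
        rw [this]
        calc ∏ i, (1 + hM.eigenvalues i) ≤ ∏ _i : Fin k, (1 + δ^2) :=
              Finset.prod_le_prod (fun i _ => by have := heig0 i; linarith)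
                (fun i _ => by have := heig1 i; linarith)
          _ = (1 + δ^2)^k := by rw [Finset.prod_const, Finset.card_univ, Fintype.card_fin]
      · have hkpos : 0 < k := by rcases ho with ⟨m, rfl⟩; omega
        have hdetA : A.det = 0 := by
          have h1 : A.det = (-A).det := by rw [← hA, det_transpose]
          rw [det_neg, Fintype.card_fin] at h1
          rw [Odd.neg_one_pow ho] at h1
          linarith
        have hdetM : (Aᵀ * A).det = 0 := by rw [det_mul, det_transpose, hdetA, mul_zero]
        have hprod0 : ∏ i, hM.eigenvalues i = 0 := by
          have := hM.det_eq_prod_eigenvalues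
          rw [hdetM] at this
          exact_mod_cast this.symm
        obtain ⟨j, _, hj⟩ := Finset.prod_eq_zero_iff.mp hprod0
        have : 2 * (k/2) = k - 1 := by rcases ho with ⟨m, hm⟩; omega
        rw [this]
        calc ∏ i, (1 + hM.eigenvalues i)
            = (1 + hM.eigenvalues j) * ∏ i ∈ Finset.univ.erase j, (1 + hM.eigenvalues i) := by
              exact (Finset.mul_prod_erase Finset.univ _ (Finset.mem_univ j)).symm
          _ = ∏ i ∈ Finset.univ.erase j, (1 + hM.eigenvalues i) := by rw [hj]; ring
          _ ≤ ∏ _i ∈ Finset.univ.erase j, (1 + δ^2) :=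
              Finset.prod_le_prod (fun i _ => by have := heig0 i; linarith)
                (fun i _ => by have := heig1 i; linarith)
          _ = (1 + δ^2)^(k-1) := by
              rw [Finset.prod_const, Finset.card_erase_of_mem (Finset.mem_univ j),
                Finset.card_univ, Fintype.card_fin]
    have h2 : (1 + A).det * (1 + A).det ≤ ((1 + δ^2)^(k/2)) * ((1 + δ^2)^(k/2)) := by
      rw [hsq, ← pow_add]
      calc ∏ i, (1 + hM.eigenvalues i) ≤ (1 + δ^2)^(2*(k/2)) := hub
        _ = (1 + δ^2)^(k/2 + k/2) := by ring_nf
    nlinarith [pow_pos (show (0:ℝ) < 1 + δ^2 by nlinarith) (k/2)]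

lemma det_sub_factor {n k : ℕ} (lam : Fin n → ℝ) (hpos : ∀ i, 0 < lam i)
    (β : Matrix (Fin n) (Fin n) ℝ) (e : Fin k → Fin n) (he : Function.Injective e) :
    ((Matrix.diagonal lam + β).submatrix e e).det =
      (∏ i, lam (e i)) *
        (1 + ((Matrix.diagonal (fun i => 1 / Real.sqrt (lam i)) * β *
          Matrix.diagonal (fun i => 1 / Real.sqrt (lam i))).submatrix e e)).det := by
  set d : Fin n → ℝ := fun i => 1 / Real.sqrt (lam i) with hd
  set C := Matrix.diagonal d * β * Matrix.diagonal d with hC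
  have hs : ∀ m, Real.sqrt (lam m) ≠ 0 := fun m => (Real.sqrt_pos.2 (hpos m)).ne'
  have hdm : ∀ m, d m = (Real.sqrt (lam m))⁻¹ := fun m => one_div _
  have hCe : ∀ i j, C (e i) (e j) = d (e i) * β (e i) (e j) * d (e j) := by
    intro i j
    rw [hC, Matrix.mul_diagonal, Matrix.diagonal_mul]
  have hfac : (Matrix.diagonal lam + β).submatrix e e =
      Matrix.diagonal (fun i => Real.sqrt (lam (e i))) * (1 + C.submatrix e e) *
        Matrix.diagonal (fun i => Real.sqrt (lam (e i))) := by
    ext i j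
    rw [Matrix.mul_diagonal, Matrix.diagonal_mul]
    simp only [Matrix.submatrix_apply, Matrix.add_apply, Matrix.one_apply,
      Matrix.diagonal_apply, hCe, hdm]
    by_cases hij : i = j
    · subst hij
      rw [if_pos rfl, if_pos rfl]
      have h1 : Real.sqrt (lam (e i)) * Real.sqrt (lam (e i)) = lam (e i) :=
        Real.mul_self_sqrt (hpos (e i)).le
      rw [← h1]
      field_simp
      have h2 : Real.sqrt (lam (e i))^2 * (Real.sqrt (lam (e i)))⁻¹^2 = 1 := by
        rw [← mul_pow, mul_inv_cancel₀ (hs _), one_pow]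
      simp only [Real.sqrt_mul_self (Real.sqrt_nonneg _), Real.sqrt_sq (Real.sqrt_nonneg _)]
      linear_combination (-(β (e i) (e i))) * h2
    · rw [if_neg hij, if_neg (fun h => hij (he h))]
      field_simp
      rw [zero_add, zero_add, mul_div_cancel₀ _ (mul_ne_zero (hs _) (hs _))]
  rw [hfac, det_mul, det_mul, det_diagonal]
  have : (∏ i, Real.sqrt (lam (e i))) * (1 + C.submatrix e e).det *
      (∏ i, Real.sqrt (lam (e i))) = (∏ i, Real.sqrt (lam (e i)) * Real.sqrt (lam (e i))) *
        (1 + C.submatrix e e).det := by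
    rw [Finset.prod_mul_distrib]; ring
  rw [this]
  congr 1
  exact Finset.prod_congr rfl fun i _ => Real.mul_self_sqrt (hpos (e i)).le

lemma sandwich_skew {n : ℕ} (d : Fin n → ℝ) (β : Matrix (Fin n) (Fin n) ℝ)
    (hβ : βᵀ = -β) :
    (Matrix.diagonal d * β * Matrix.diagonal d)ᵀ =
      -(Matrix.diagonal d * β * Matrix.diagonal d) := by
  rw [transpose_mul, transpose_mul, diagonal_transpose, hβ]
  simp [Matrix.mul_neg, Matrix.neg_mul, Matrix.mul_assoc]

/-- For R = D + β with D = diag(λ) positive, β skew-symmetric and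
‖D^{-1/2} β D^{-1/2}‖ ≤ δ < 1, one has S_k(D) ≤ S_k(R) ≤ (1+δ²)^{⌊k/2⌋} S_k(D). -/
theorem Sk_perturbation_bounds {n k : ℕ} (hk : 1 ≤ k) (hkn : k ≤ n)
    (lam : Fin n → ℝ) (hpos : ∀ i, 0 < lam i)
    (β : Matrix (Fin n) (Fin n) ℝ) (hβ : βᵀ = -β)
    (δ : ℝ) (hδ0 : 0 < δ) (hδ1 : δ < 1)
    (hnorm : opNorm (Matrix.diagonal (fun i => 1 / Real.sqrt (lam i)) * β *
      Matrix.diagonal (fun i => 1 / Real.sqrt (lam i))) ≤ δ) :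
    Sk k (Matrix.diagonal lam) ≤ Sk k (Matrix.diagonal lam + β) ∧
      Sk k (Matrix.diagonal lam + β) ≤ (1 + δ ^ 2) ^ (k / 2) * Sk k (Matrix.diagonal lam) := by
  classical
  set C := Matrix.diagonal (fun i => 1 / Real.sqrt (lam i)) * β *
      Matrix.diagonal (fun i => 1 / Real.sqrt (lam i)) with hC
  have hCskew : Cᵀ = -C := sandwich_skew _ β hβ
  have hquadC := quad_bound hδ0.le hnorm
  have key : ∀ s : {s : Finset (Fin n) // s.card = k},
      ((Matrix.diagonal lam).submatrix (s.1.orderEmbOfFin s.2) (s.1.orderEmbOfFin s.2)).det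
          = ∏ i, lam (s.1.orderEmbOfFin s.2 i) ∧
        (∏ i, lam (s.1.orderEmbOfFin s.2 i)) ≤
          ((Matrix.diagonal lam + β).submatrix (s.1.orderEmbOfFin s.2)
            (s.1.orderEmbOfFin s.2)).det ∧
        ((Matrix.diagonal lam + β).submatrix (s.1.orderEmbOfFin s.2)
            (s.1.orderEmbOfFin s.2)).det ≤
          (1 + δ^2)^(k/2) * ∏ i, lam (s.1.orderEmbOfFin s.2 i) := by
    intro s
    set e : Fin k → Fin n := ⇑(s.1.orderEmbOfFin s.2) with he'
    have he : Function.Injective e := (s.1.orderEmbOfFin s.2).injective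
    have hAskew : (C.submatrix e e)ᵀ = -(C.submatrix e e) := by
      rw [transpose_submatrix, hCskew]
      rfl
    have hq := quad_bound_submatrix hquadC e he
    obtain ⟨hlb, hub⟩ := skew_det_bounds hAskew hδ0.le hq
    have hprodpos : 0 < ∏ i, lam (e i) := Finset.prod_pos fun i _ => hpos _
    have hfac := det_sub_factor lam hpos β e he
    have hfac0 : ((Matrix.diagonal lam).submatrix e e).det = ∏ i, lam (e i) := by
      have h0 := det_sub_factor lam hpos (0 : Matrix (Fin n) (Fin n) ℝ) e he
      simpa using h0
    refine ⟨hfac0, ?_, ?_⟩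
    · rw [hfac]
      exact le_mul_of_one_le_right hprodpos.le hlb
    · rw [hfac, mul_comm ((1 + δ^2)^(k/2))]
      exact mul_le_mul_of_nonneg_left hub hprodpos.le
  constructor
  · unfold Sk
    apply Finset.sum_le_sum
    intro s _
    obtain ⟨h1, h2, _⟩ := key s
    rw [h1]
    exact h2
  · unfold Sk
    rw [Finset.mul_sum]
    apply Finset.sum_le_sum
    intro s _
    obtain ⟨h1, _, h3⟩ := key s
    rw [h1]
    exact h3
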